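/- Let X = E₈⁸ (8 orthogonal copies of E₈), d = ι_1 + ⋯ + ι_8, and 𝒟₈ the D₈ ⊗ E₈ sublattice spanned by {ν_{i,j}(α), μ_{i,j}(α)}. Then the lattice ℰ₈ = span_ℤ{𝒟₈, (1/2)d(E₈)} ⊂ (1/2)X is isometric to E₈ ⊗ E₈, and ℰ₈ is an even unimodular lattice of rank 64. -/

import Mathlib

open TensorProduct

/-- The Cartan matrix of `E₈` (Bourbaki numbering) over `ℚ`. -/
def cartanE8Q : Matrix (Fin 8) (Fin 8) ℚ :=
  !![2, 0, -1, 0, 0, 0, 0, 0;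
     0, 2, 0, -1, 0, 0, 0, 0;
     -1, 0, 2, -1, 0, 0, 0, 0;
     0, -1, -1, 2, -1, 0, 0, 0;
     0, 0, 0, -1, 2, -1, 0, 0;
     0, 0, 0, 0, -1, 2, -1, 0;
     0, 0, 0, 0, 0, -1, 2, -1;
     0, 0, 0, 0, 0, 0, -1, 2]

/-- The Cartan matrix of `E₈` over `ℤ`. -/
def cartanE8 : Matrix (Fin 8) (Fin 8) ℤ :=
  !![2, 0, -1, 0, 0, 0, 0, 0;
     0, 2, 0, -1, 0, 0, 0, 0;
     -1, 0, 2, -1, 0, 0, 0, 0;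
     0, -1, -1, 2, -1, 0, 0, 0;
     0, 0, 0, -1, 2, -1, 0, 0;
     0, 0, 0, 0, -1, 2, -1, 0;
     0, 0, 0, 0, 0, -1, 2, -1;
     0, 0, 0, 0, 0, 0, -1, 2]

/-- The `E₈` bilinear form on `ℚ⁸` (coordinates in a basis of simple roots). -/
noncomputable def bE8Q : LinearMap.BilinForm ℚ (Fin 8 → ℚ) :=
  Matrix.toLinearMap₂' ℚ cartanE8Q

/-- The `E₈` bilinear form on `ℤ⁸`. -/
noncomputable def bE8 : LinearMap.BilinForm ℤ (Fin 8 → ℤ) :=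
  Matrix.toLinearMap₂' ℤ cartanE8

/-- A vector of `ℚ⁸` lies in the `E₈` lattice iff all its coordinates (in the simple
root basis) are integers. -/
def IsIntVec (x : Fin 8 → ℚ) : Prop := ∀ k, ∃ m : ℤ, x k = (m : ℚ)

/-- The orthogonal form on `X = E₈ ⊥ ⋯ ⊥ E₈` (8 copies), rationalized. -/
noncomputable def bX8 (x y : Fin 8 → Fin 8 → ℚ) : ℚ := ∑ i, bE8Q (x i) (y i)

/-- `𝒟₈ = span_ℤ { ν_{i,j}(α), μ_{i,j}(α) : α ∈ E₈, i < j } ⊆ ℚ ⊗ X`. -/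
def calD8 : Submodule ℤ (Fin 8 → Fin 8 → ℚ) :=
  Submodule.span ℤ
    {z | ∃ α : Fin 8 → ℚ, IsIntVec α ∧ ∃ i j : Fin 8, i < j ∧
      (z = Pi.single i α - Pi.single j α ∨ z = Pi.single i α + Pi.single j α)}

/-- `ℰ₈ = span_ℤ { 𝒟₈, (1/2)d(E₈) } ⊂ (1/2)X`, where
`(1/2)d(α) = (α/2, …, α/2)`. -/
def calE8 : Submodule ℤ (Fin 8 → Fin 8 → ℚ) :=
  calD8 ⊔ Submodule.span ℤ
    {z | ∃ α : Fin 8 → ℚ, IsIntVec α ∧ z = fun _ => (1/2 : ℚ) • α}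

namespace CalAux

/-! ### integer matrices and numeric facts -/

def AZ2 : Matrix (Fin 8) (Fin 8) ℤ :=
  !![1,2,-2,0,0,0,0,0; -1,2,2,-2,0,0,0,0; -1,0,0,2,-2,0,0,0; -1,0,0,0,2,-2,0,0;
     -1,0,0,0,0,2,-2,0; -1,0,0,0,0,0,2,-2; -1,0,0,0,0,0,0,2; 1,0,0,0,0,0,0,0]

def CinvZ : Matrix (Fin 8) (Fin 8) ℤ :=
  !![4,5,7,10,8,6,4,2; 5,8,10,15,12,9,6,3; 7,10,14,20,16,12,8,4; 10,15,20,30,24,18,12,6;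
     8,12,16,24,20,15,10,5; 6,9,12,18,15,12,8,4; 4,6,8,12,10,8,6,3; 2,3,4,6,5,4,3,2]

def DZ : Matrix (Fin 8) (Fin 8) ℤ :=
  !![0,0,0,0,0,0,0,4; 1,1,1,1,1,1,1,5; -1,1,1,1,1,1,1,7; 0,0,2,2,2,2,2,10;
     0,0,0,2,2,2,2,8; 0,0,0,0,2,2,2,6; 0,0,0,0,0,2,2,4; 0,0,0,0,0,0,2,2]

set_option maxRecDepth 40000 in
lemma hCC : cartanE8 * CinvZ = 1 := by decide

lemma hCC' : CinvZ * cartanE8 = 1 := mul_eq_one_comm.mp hCC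

set_option maxRecDepth 40000 in
lemma hgramZ : AZ2.transpose * AZ2 = (4:ℤ) • cartanE8 := by decide

set_option maxRecDepth 40000 in
lemma hDZ : CinvZ * AZ2.transpose = DZ := by decide

set_option maxRecDepth 40000 in
lemma hDpar : ∀ t i j : Fin 8, (2:ℤ) ∣ (DZ t i - DZ t j) ∧ (2:ℤ) ∣ (DZ t i + DZ t j) := by decide

set_option maxRecDepth 40000 in
lemma hDsum : ∀ t : Fin 8, (4:ℤ) ∣ ∑ i, DZ t i := by decide

/-! ### rational matrices -/

noncomputable def cq : Matrix (Fin 8) (Fin 8) ℤ → Matrix (Fin 8) (Fin 8) ℚ :=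
  fun M => M.map (Int.castRingHom ℚ)

lemma cq_mul (M N : Matrix (Fin 8) (Fin 8) ℤ) : cq (M * N) = cq M * cq N := Matrix.map_mul

lemma cq_one : cq 1 = 1 := by simp [cq]

lemma cq_transpose (M : Matrix (Fin 8) (Fin 8) ℤ) : cq M.transpose = (cq M).transpose :=
  Matrix.transpose_map

lemma cq_apply (M : Matrix (Fin 8) (Fin 8) ℤ) (i j : Fin 8) : cq M i j = (M i j : ℚ) := rfl

lemma cq_smul (M : Matrix (Fin 8) (Fin 8) ℤ) (c : ℤ) : cq (c • M) = (c:ℚ) • cq M := by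
  ext i j
  show ((c • M) i j : ℤ) = ((c:ℚ) • cq M) i j
  rw [Matrix.smul_apply, Matrix.smul_apply, smul_eq_mul, smul_eq_mul, cq_apply]
  push_cast
  ring

lemma castC : cq cartanE8 = cartanE8Q := by
  ext i j
  rw [cq_apply]
  fin_cases i <;> fin_cases j <;> norm_num [cartanE8, cartanE8Q]

noncomputable def Aq : Matrix (Fin 8) (Fin 8) ℚ := (2:ℚ)⁻¹ • cq AZ2

noncomputable def Nq : Matrix (Fin 8) (Fin 8) ℚ := cq CinvZ * Aq.transpose

lemma gramQ : Aq.transpose * Aq = cartanE8Q := by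
  have h4 : cq (AZ2.transpose * AZ2) = cq ((4:ℤ) • cartanE8) := by rw [hgramZ]
  rw [cq_mul, cq_smul, cq_transpose, castC] at h4
  rw [Aq, Matrix.transpose_smul, Matrix.smul_mul, Matrix.mul_smul, h4]
  rw [smul_smul, smul_smul]
  norm_num

lemma NAq : Nq * Aq = 1 := by
  rw [Nq, Matrix.mul_assoc, gramQ, ← castC, ← cq_mul, hCC', cq_one]

lemma ANq : Aq * Nq = 1 := mul_eq_one_comm.mp NAq

lemma Nq_eq : Nq = (2:ℚ)⁻¹ • cq DZ := by
  rw [Nq, Aq, Matrix.transpose_smul, Matrix.mul_smul, ← cq_transpose, ← cq_mul, hDZ]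

lemma Nq_apply (t i : Fin 8) : Nq t i = (DZ t i : ℚ) / 2 := by
  rw [Nq_eq, Matrix.smul_apply, cq_apply, smul_eq_mul]; ring

lemma N_sub_int (t i j : Fin 8) : ∃ d : ℤ, Nq t i - Nq t j = (d : ℚ) := by
  obtain ⟨d, hd⟩ := (hDpar t i j).1
  refine ⟨d, ?_⟩
  rw [Nq_apply, Nq_apply, div_sub_div_same]
  rw [show ((DZ t i : ℚ) - DZ t j) = ((DZ t i - DZ t j : ℤ) : ℚ) by push_cast; ring, hd]
  push_cast; ring

lemma N_add_int (t i j : Fin 8) : ∃ d : ℤ, Nq t i + Nq t j = (d : ℚ) := by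
  obtain ⟨d, hd⟩ := (hDpar t i j).2
  refine ⟨d, ?_⟩
  rw [Nq_apply, Nq_apply, ← add_div]
  rw [show ((DZ t i : ℚ) + DZ t j) = ((DZ t i + DZ t j : ℤ) : ℚ) by push_cast; ring, hd]
  push_cast; ring

lemma N_sum_int (t : Fin 8) : ∃ d : ℤ, ∑ i, Nq t i = 2 * (d : ℚ) := by
  obtain ⟨d, hd⟩ := hDsum t
  refine ⟨d, ?_⟩
  have : ∑ i, Nq t i = ((∑ i, DZ t i : ℤ) : ℚ) / 2 := by
    push_cast
    rw [Finset.sum_div]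
    exact Finset.sum_congr rfl fun i _ => Nq_apply t i
  rw [this, hd]; push_cast; ring

end CalAux

namespace CalAux

lemma fv0 : ((0:Fin 8):ℕ) = 0 := rfl
lemma fv1 : ((1:Fin 8):ℕ) = 1 := rfl
lemma fv2 : ((2:Fin 8):ℕ) = 2 := rfl
lemma fv3 : ((3:Fin 8):ℕ) = 3 := rfl
lemma fv4 : ((4:Fin 8):ℕ) = 4 := rfl
lemma fv5 : ((5:Fin 8):ℕ) = 5 := rfl
lemma fv6 : ((6:Fin 8):ℕ) = 6 := rfl
lemma fv7 : ((7:Fin 8):ℕ) = 7 := rfl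

noncomputable def gg (p : Fin 8 × Fin 8) : Fin 8 → Fin 8 → ℚ :=
  fun i m => Aq i p.1 * (if m = p.2 then 1 else 0)

def ek (k : Fin 8) : Fin 8 → ℚ := fun m => if m = k then 1 else 0

lemma ek_int (k : Fin 8) : IsIntVec (ek k) := by
  intro m
  by_cases h : m = k
  · exact ⟨1, by simp [ek, h]⟩
  · exact ⟨0, by simp [ek, h]⟩

lemma single_apply₂ (i i' k : Fin 8) (α : Fin 8 → ℚ) :
    (Pi.single i α : Fin 8 → Fin 8 → ℚ) i' k = if i' = i then α k else 0 := by
  rw [Pi.single_apply]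
  split <;> simp

lemma gg_mem (p : Fin 8 × Fin 8) : gg p ∈ calE8 := by
  obtain ⟨t, k⟩ := p
  have hD : ∀ z ∈ {z | ∃ α : Fin 8 → ℚ, IsIntVec α ∧ ∃ i j : Fin 8, i < j ∧
      (z = Pi.single i α - Pi.single j α ∨ z = Pi.single i α + Pi.single j α)}, z ∈ calE8 :=
    fun z hz => Submodule.mem_sup_left (Submodule.subset_span hz)
  have hH : ∀ z ∈ {z | ∃ α : Fin 8 → ℚ, IsIntVec α ∧ z = fun _ => (1/2 : ℚ) • α},
      z ∈ calE8 := fun z hz => Submodule.mem_sup_right (Submodule.subset_span hz)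
  have hμ : ∀ i j : Fin 8, i < j → (Pi.single i (ek k) + Pi.single j (ek k) : Fin 8 → Fin 8 → ℚ) ∈ calE8 :=
    fun i j hij => hD _ ⟨ek k, ek_int k, i, j, hij, Or.inr rfl⟩
  have hν : ∀ i j : Fin 8, i < j → (Pi.single i (ek k) - Pi.single j (ek k) : Fin 8 → Fin 8 → ℚ) ∈ calE8 :=
    fun i j hij => hD _ ⟨ek k, ek_int k, i, j, hij, Or.inl rfl⟩
  have hhalf : (fun (_ : Fin 8) => (1/2 : ℚ) • ek k) ∈ calE8 := hH _ ⟨ek k, ek_int k, rfl⟩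
  have hνm : ∀ i j : Fin 8, i < j → (Pi.single j (ek k) - Pi.single i (ek k) : Fin 8 → Fin 8 → ℚ) ∈ calE8 := by
    intro i j hij
    have := Submodule.neg_mem _ (hν i j hij)
    rwa [neg_sub] at this
  fin_cases t
  · refine show gg (⟨0, by norm_num⟩, k) ∈ calE8 from ?_
    have h0 : gg (⟨0, by norm_num⟩, k) = (fun (_ : Fin 8) => (1/2 : ℚ) • ek k)
        - (Pi.single 1 (ek k) + Pi.single 2 (ek k))
        - (Pi.single 3 (ek k) + Pi.single 4 (ek k))
        - (Pi.single 5 (ek k) + Pi.single 6 (ek k)) := by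
      funext i m
      simp only [Pi.sub_apply, Pi.add_apply, Pi.smul_apply, gg, single_apply₂, smul_eq_mul]
      fin_cases i <;> norm_num [Aq, AZ2, cq_apply, ek, Matrix.smul_apply, Fin.ext_iff, fv0, fv1, fv2, fv3, fv4, fv5, fv6, fv7] <;> split <;> norm_num
    rw [h0]
    exact Submodule.sub_mem _ (Submodule.sub_mem _ (Submodule.sub_mem _ hhalf
      (hμ 1 2 (by decide))) (hμ 3 4 (by decide))) (hμ 5 6 (by decide))
  · refine show gg (⟨1, by norm_num⟩, k) ∈ calE8 from ?_
    have h1 : gg (⟨1, by norm_num⟩, k) = Pi.single 0 (ek k) + Pi.single 1 (ek k) := by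
      funext i m
      simp only [Pi.sub_apply, Pi.add_apply, Pi.smul_apply, gg, single_apply₂, smul_eq_mul]
      fin_cases i <;> norm_num [Aq, AZ2, cq_apply, ek, Matrix.smul_apply, Fin.ext_iff, fv0, fv1, fv2, fv3, fv4, fv5, fv6, fv7] <;> split <;> norm_num
    rw [h1]
    exact hμ 0 1 (by decide)
  · refine show gg (⟨2, by norm_num⟩, k) ∈ calE8 from ?_
    have h : gg (⟨2, by norm_num⟩, k) = Pi.single 1 (ek k) - Pi.single 0 (ek k) := by
      funext i m
      simp only [Pi.sub_apply, Pi.add_apply, Pi.smul_apply, gg, single_apply₂, smul_eq_mul]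
      fin_cases i <;> norm_num [Aq, AZ2, cq_apply, ek, Matrix.smul_apply, Fin.ext_iff, fv0, fv1, fv2, fv3, fv4, fv5, fv6, fv7] <;> split <;> norm_num
    rw [h]
    exact hνm 0 1 (by decide)
  · refine show gg (⟨3, by norm_num⟩, k) ∈ calE8 from ?_
    have h : gg (⟨3, by norm_num⟩, k) = Pi.single 2 (ek k) - Pi.single 1 (ek k) := by
      funext i m
      simp only [Pi.sub_apply, Pi.add_apply, Pi.smul_apply, gg, single_apply₂, smul_eq_mul]
      fin_cases i <;> norm_num [Aq, AZ2, cq_apply, ek, Matrix.smul_apply, Fin.ext_iff, fv0, fv1, fv2, fv3, fv4, fv5, fv6, fv7] <;> split <;> norm_num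
    rw [h]
    exact hνm 1 2 (by decide)
  · refine show gg (⟨4, by norm_num⟩, k) ∈ calE8 from ?_
    have h : gg (⟨4, by norm_num⟩, k) = Pi.single 3 (ek k) - Pi.single 2 (ek k) := by
      funext i m
      simp only [Pi.sub_apply, Pi.add_apply, Pi.smul_apply, gg, single_apply₂, smul_eq_mul]
      fin_cases i <;> norm_num [Aq, AZ2, cq_apply, ek, Matrix.smul_apply, Fin.ext_iff, fv0, fv1, fv2, fv3, fv4, fv5, fv6, fv7] <;> split <;> norm_num
    rw [h]
    exact hνm 2 3 (by decide)
  · refine show gg (⟨5, by norm_num⟩, k) ∈ calE8 from ?_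
    have h : gg (⟨5, by norm_num⟩, k) = Pi.single 4 (ek k) - Pi.single 3 (ek k) := by
      funext i m
      simp only [Pi.sub_apply, Pi.add_apply, Pi.smul_apply, gg, single_apply₂, smul_eq_mul]
      fin_cases i <;> norm_num [Aq, AZ2, cq_apply, ek, Matrix.smul_apply, Fin.ext_iff, fv0, fv1, fv2, fv3, fv4, fv5, fv6, fv7] <;> split <;> norm_num
    rw [h]
    exact hνm 3 4 (by decide)
  · refine show gg (⟨6, by norm_num⟩, k) ∈ calE8 from ?_
    have h : gg (⟨6, by norm_num⟩, k) = Pi.single 5 (ek k) - Pi.single 4 (ek k) := by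
      funext i m
      simp only [Pi.sub_apply, Pi.add_apply, Pi.smul_apply, gg, single_apply₂, smul_eq_mul]
      fin_cases i <;> norm_num [Aq, AZ2, cq_apply, ek, Matrix.smul_apply, Fin.ext_iff, fv0, fv1, fv2, fv3, fv4, fv5, fv6, fv7] <;> split <;> norm_num
    rw [h]
    exact hνm 4 5 (by decide)
  · refine show gg (⟨7, by norm_num⟩, k) ∈ calE8 from ?_
    have h : gg (⟨7, by norm_num⟩, k) = Pi.single 6 (ek k) - Pi.single 5 (ek k) := by
      funext i m
      simp only [Pi.sub_apply, Pi.add_apply, Pi.smul_apply, gg, single_apply₂, smul_eq_mul]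
      fin_cases i <;> norm_num [Aq, AZ2, cq_apply, ek, Matrix.smul_apply, Fin.ext_iff, fv0, fv1, fv2, fv3, fv4, fv5, fv6, fv7] <;> split <;> norm_num
    rw [h]
    exact hνm 5 6 (by decide)

end CalAux

namespace CalAux

noncomputable def lcoef (t k : Fin 8) : (Fin 8 → Fin 8 → ℚ) →ₗ[ℚ] ℚ where
  toFun x := ∑ i, Nq t i * x i k
  map_add' x y := by simp [mul_add, Finset.sum_add_distrib]
  map_smul' c x := by simp [Finset.mul_sum, mul_left_comm]

lemma lcoef_apply (t k : Fin 8) (x : Fin 8 → Fin 8 → ℚ) :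
    lcoef t k x = ∑ i, Nq t i * x i k := rfl

def S1 : Set (Fin 8 → Fin 8 → ℚ) :=
  {z | ∃ α : Fin 8 → ℚ, IsIntVec α ∧ ∃ i j : Fin 8, i < j ∧
    (z = Pi.single i α - Pi.single j α ∨ z = Pi.single i α + Pi.single j α)}

def S2 : Set (Fin 8 → Fin 8 → ℚ) :=
  {z | ∃ α : Fin 8 → ℚ, IsIntVec α ∧ z = fun _ => (1/2 : ℚ) • α}

lemma calE8_eq_span : calE8 = Submodule.span ℤ (S1 ∪ S2) := by
  rw [calE8, calD8, Submodule.span_union]; rfl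

lemma lcoef_int_of_mem {x : Fin 8 → Fin 8 → ℚ} (hx : x ∈ calE8) (t k : Fin 8) :
    ∃ m : ℤ, lcoef t k x = (m : ℚ) := by
  rw [calE8_eq_span] at hx
  induction hx using Submodule.span_induction with
  | mem z hz =>
    rcases hz with hz | hz
    · obtain ⟨α, hα, i0, j0, _, hc⟩ := hz
      obtain ⟨a, ha⟩ := hα k
      rcases hc with rfl | rfl
      · obtain ⟨d, hd⟩ := N_sub_int t i0 j0
        refine ⟨d * a, ?_⟩
        have : lcoef t k (Pi.single i0 α - Pi.single j0 α) = (Nq t i0 - Nq t j0) * α k := by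
          simp only [lcoef_apply, Pi.sub_apply, single_apply₂, mul_sub, mul_ite, mul_zero,
            Finset.sum_sub_distrib, Finset.sum_ite_eq', Finset.mem_univ, if_true]
          ring
        rw [this, hd, ha]; push_cast; ring
      · obtain ⟨d, hd⟩ := N_add_int t i0 j0
        refine ⟨d * a, ?_⟩
        have : lcoef t k (Pi.single i0 α + Pi.single j0 α) = (Nq t i0 + Nq t j0) * α k := by
          simp only [lcoef_apply, Pi.add_apply, single_apply₂, mul_add, mul_ite, mul_zero,
            Finset.sum_add_distrib, Finset.sum_ite_eq', Finset.mem_univ, if_true]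
          ring
        rw [this, hd, ha]; push_cast; ring
    · obtain ⟨α, hα, rfl⟩ := hz
      obtain ⟨a, ha⟩ := hα k
      obtain ⟨d, hd⟩ := N_sum_int t
      refine ⟨d * a, ?_⟩
      have : lcoef t k (fun (_ : Fin 8) => (1/2 : ℚ) • α) = (∑ i, Nq t i) * ((1/2) * α k) := by
        simp only [lcoef_apply, Pi.smul_apply, smul_eq_mul, Finset.sum_mul]
        try exact Finset.sum_congr rfl fun i _ => by ring
      rw [this, hd, ha]; push_cast; ring
  | zero => exact ⟨0, by simp [lcoef_apply]⟩
  | add x y hx hy ihx ihy =>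
    obtain ⟨mx, hmx⟩ := ihx; obtain ⟨my, hmy⟩ := ihy
    exact ⟨mx + my, by rw [map_add, hmx, hmy]; push_cast; ring⟩
  | smul a x hx ih =>
    obtain ⟨m, hm⟩ := ih
    refine ⟨a * m, ?_⟩
    rw [map_zsmul, hm, zsmul_eq_mul]; push_cast; ring

lemma decomp (x : Fin 8 → Fin 8 → ℚ) :
    ∑ p : Fin 8 × Fin 8, lcoef p.1 p.2 x • gg p = x := by
  funext i m
  have h1 : (∑ p : Fin 8 × Fin 8, lcoef p.1 p.2 x • gg p) i m
      = ∑ p : Fin 8 × Fin 8, lcoef p.1 p.2 x * (Aq i p.1 * (if m = p.2 then 1 else 0)) := by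
    rw [Finset.sum_apply, Finset.sum_apply]
    exact Finset.sum_congr rfl fun p _ => rfl
  rw [h1, Fintype.sum_prod_type]
  have h2 : ∀ t : Fin 8, ∑ l : Fin 8, lcoef t l x * (Aq i t * (if m = l then 1 else 0))
      = lcoef t m x * Aq i t := by
    intro t
    simp [mul_ite, Finset.sum_ite_eq, eq_comm]
  rw [Finset.sum_congr rfl fun t _ => h2 t]
  have h3 : ∑ t, lcoef t m x * Aq i t = ∑ t, ∑ j, Aq i t * Nq t j * x j m := by
    refine Finset.sum_congr rfl fun t _ => ?_
    rw [lcoef_apply, Finset.sum_mul]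
    exact Finset.sum_congr rfl fun j _ => by ring
  rw [h3, Finset.sum_comm]
  have h4 : ∀ j, ∑ t, Aq i t * Nq t j * x j m = (if i = j then 1 else 0) * x j m := by
    intro j
    rw [← Finset.sum_mul]
    congr 1
    have : ∑ t, Aq i t * Nq t j = (Aq * Nq) i j := (Matrix.mul_apply).symm
    rw [this, ANq, Matrix.one_apply]
  rw [Finset.sum_congr rfl fun j _ => h4 j]
  simp [Finset.sum_ite_eq, ite_mul]

lemma lcoef_gg (t k : Fin 8) (p : Fin 8 × Fin 8) :
    lcoef t k (gg p) = (if t = p.1 then (1:ℚ) else 0) * (if k = p.2 then 1 else 0) := by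
  rw [lcoef_apply]
  have h1 : ∑ i, Nq t i * (Aq i p.1 * (if k = p.2 then 1 else 0))
      = (∑ i, Nq t i * Aq i p.1) * (if k = p.2 then 1 else 0) := by
    rw [Finset.sum_mul]
    exact Finset.sum_congr rfl fun i _ => by ring
  rw [show (gg p : Fin 8 → Fin 8 → ℚ) = fun i m => Aq i p.1 * (if m = p.2 then 1 else 0) from rfl]
  rw [h1]
  have : ∑ i, Nq t i * Aq i p.1 = (Nq * Aq) t p.1 := (Matrix.mul_apply).symm
  rw [this, NAq, Matrix.one_apply]

lemma mem_calE8_of_lcoef_int {x : Fin 8 → Fin 8 → ℚ}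
    (h : ∀ t k, ∃ m : ℤ, lcoef t k x = (m : ℚ)) : x ∈ calE8 := by
  choose mf hmf using h
  rw [← decomp x]
  refine Submodule.sum_mem _ fun p _ => ?_
  rw [hmf p.1 p.2, Int.cast_smul_eq_zsmul]
  exact Submodule.smul_mem _ _ (gg_mem p)

lemma charE8 (x : Fin 8 → Fin 8 → ℚ) :
    x ∈ calE8 ↔ ∀ t k, ∃ m : ℤ, lcoef t k x = (m : ℚ) :=
  ⟨fun hx t k => lcoef_int_of_mem hx t k, mem_calE8_of_lcoef_int⟩

lemma span_gg : Submodule.span ℤ (Set.range gg) = calE8 := by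
  refine le_antisymm (Submodule.span_le.mpr ?_) fun x hx => ?_
  · rintro z ⟨p, rfl⟩; exact gg_mem p
  · choose mf hmf using (charE8 x).mp hx
    rw [← decomp x]
    refine Submodule.sum_mem _ fun p _ => ?_
    rw [hmf p.1 p.2, Int.cast_smul_eq_zsmul]
    exact Submodule.smul_mem _ _ (Submodule.subset_span ⟨p, rfl⟩)

lemma indep_gg : LinearIndependent ℤ gg := by
  rw [Fintype.linearIndependent_iff]
  intro c h p
  have h0 := congrArg (lcoef p.1 p.2) h
  rw [map_sum, map_zero] at h0
  have h1 : ∀ q : Fin 8 × Fin 8, lcoef p.1 p.2 (c q • gg q)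
      = (c q : ℚ) * ((if p.1 = q.1 then 1 else 0) * (if p.2 = q.2 then 1 else 0)) := by
    intro q
    rw [map_zsmul, lcoef_gg, zsmul_eq_mul]
  rw [Finset.sum_congr rfl fun q _ => h1 q, Fintype.sum_prod_type] at h0
  have h2 : ((c p : ℚ)) = 0 := by
    rw [← h0]
    rw [Finset.sum_eq_single p.1]
    · rw [Finset.sum_eq_single p.2]
      · simp
      · intro b _ hb; simp [Ne.symm hb]
      · simp
    · intro b _ hb
      refine Finset.sum_eq_zero fun l _ => by simp [Ne.symm hb]
    · simp
  exact_mod_cast h2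

end CalAux

namespace CalAux

/-! ### bilinear form as a `LinearMap.BilinForm` -/

noncomputable def bXf : LinearMap.BilinForm ℚ (Fin 8 → Fin 8 → ℚ) :=
  LinearMap.mk₂ ℚ (fun x y => bX8 x y)
    (fun x x' y => by
      simp [bX8, Pi.add_apply, map_add, LinearMap.add_apply, Finset.sum_add_distrib])
    (fun c x y => by
      simp [bX8, Pi.smul_apply, map_smul, LinearMap.smul_apply, Finset.smul_sum, Finset.mul_sum])
    (fun x y y' => by
      simp [bX8, Pi.add_apply, map_add, Finset.sum_add_distrib])
    (fun c x y => by
      simp [bX8, Pi.smul_apply, map_smul, Finset.smul_sum, Finset.mul_sum])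

lemma bX8_eq (x y : Fin 8 → Fin 8 → ℚ) : bX8 x y = bXf x y := rfl

lemma bE8Q_apply (v w : Fin 8 → ℚ) :
    bE8Q v w = ∑ k, ∑ l, v k * (w l * cartanE8Q k l) := by
  rw [bE8Q, Matrix.toLinearMap₂'_apply]
  exact Finset.sum_congr rfl fun k _ => Finset.sum_congr rfl fun l _ => by
    rw [smul_eq_mul, smul_eq_mul]

lemma bX8_gg (p q : Fin 8 × Fin 8) :
    bX8 (gg p) (gg q) = cartanE8Q p.1 q.1 * cartanE8Q p.2 q.2 := by
  have h1 : ∀ i, bE8Q (gg p i) (gg q i) = Aq i p.1 * Aq i q.1 * cartanE8Q p.2 q.2 := by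
    intro i
    rw [bE8Q_apply]
    rw [show (gg p i : Fin 8 → ℚ) = fun m => Aq i p.1 * (if m = p.2 then 1 else 0) from rfl]
    rw [show (gg q i : Fin 8 → ℚ) = fun m => Aq i q.1 * (if m = q.2 then 1 else 0) from rfl]
    simp only [ite_mul, mul_ite, mul_zero, zero_mul, one_mul, mul_one,
      Finset.sum_ite_eq', Finset.mem_univ, if_true]
    ring
  rw [bX8, Finset.sum_congr rfl fun i _ => h1 i, ← Finset.sum_mul]
  congr 1
  have : ∑ i, Aq i p.1 * Aq i q.1 = (Aq.transpose * Aq) p.1 q.1 := by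
    rw [Matrix.mul_apply]
    exact Finset.sum_congr rfl fun i _ => by rw [Matrix.transpose_apply]
  rw [this, gramQ]

lemma bX8_sum (c d : Fin 8 × Fin 8 → ℚ) :
    bX8 (∑ p, c p • gg p) (∑ q, d q • gg q)
      = ∑ p : Fin 8 × Fin 8, ∑ q : Fin 8 × Fin 8,
          c p * d q * (cartanE8Q p.1 q.1 * cartanE8Q p.2 q.2) := by
  have step1 : ∀ y, bXf (∑ p, c p • gg p) y = ∑ p, c p * bXf (gg p) y := by
    intro y
    rw [map_sum, LinearMap.sum_apply]
    exact Finset.sum_congr rfl fun p _ => by rw [map_smul, LinearMap.smul_apply, smul_eq_mul]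
  rw [bX8_eq, step1]
  refine Finset.sum_congr rfl fun p _ => ?_
  have step2 : bXf (gg p) (∑ q, d q • gg q) = ∑ q, d q * bXf (gg p) (gg q) := by
    rw [map_sum]
    exact Finset.sum_congr rfl fun q _ => by rw [map_smul, smul_eq_mul]
  rw [step2, Finset.mul_sum]
  exact Finset.sum_congr rfl fun q _ => by rw [← bX8_eq, bX8_gg]; ring

end CalAux

namespace CalAux

/-! ### the basis of `calE8` and the isometry -/

noncomputable def bT : Module.Basis (Fin 8 × Fin 8) ℤ ((Fin 8 → ℤ) ⊗[ℤ] (Fin 8 → ℤ)) :=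
  Module.Basis.tensorProduct (Pi.basisFun ℤ (Fin 8)) (Pi.basisFun ℤ (Fin 8))

noncomputable def bE : Module.Basis (Fin 8 × Fin 8) ℤ calE8 :=
  (Module.Basis.span indep_gg).map (LinearEquiv.ofEq _ _ span_gg)

lemma bE_coe (p : Fin 8 × Fin 8) : (bE p : Fin 8 → Fin 8 → ℚ) = gg p := by
  rw [bE, Module.Basis.map_apply, LinearEquiv.coe_ofEq_apply, Module.Basis.span_apply]

noncomputable def fIso : ((Fin 8 → ℤ) ⊗[ℤ] (Fin 8 → ℤ)) ≃ₗ[ℤ] calE8 :=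
  bT.equiv bE (Equiv.refl _)

lemma fIso_basis (p : Fin 8 × Fin 8) : fIso (bT p) = bE p := by
  rw [fIso, Module.Basis.equiv_apply, Equiv.refl_apply]

noncomputable def Phi : ((Fin 8 → ℤ) ⊗[ℤ] (Fin 8 → ℤ)) →ₗ[ℤ]
    ((Fin 8 → ℤ) ⊗[ℤ] (Fin 8 → ℤ)) →ₗ[ℤ] ℚ :=
  LinearMap.mk₂ ℤ (fun u v => bXf (fIso u : Fin 8 → Fin 8 → ℚ) (fIso v : Fin 8 → Fin 8 → ℚ))
    (fun u u' v => by simp only [map_add, Submodule.coe_add, LinearMap.add_apply])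
    (fun c u v => by simp only [map_smul, Submodule.coe_smul, map_zsmul, LinearMap.smul_apply])
    (fun u v v' => by simp only [map_add, Submodule.coe_add])
    (fun c u v => by simp only [map_smul, Submodule.coe_smul, map_zsmul])

noncomputable def Psi : ((Fin 8 → ℤ) ⊗[ℤ] (Fin 8 → ℤ)) →ₗ[ℤ]
    ((Fin 8 → ℤ) ⊗[ℤ] (Fin 8 → ℤ)) →ₗ[ℤ] ℚ :=
  (LinearMap.BilinForm.tmul bE8 bE8).compr₂ (Algebra.linearMap ℤ ℚ)

lemma bE8_single (a b : Fin 8) : bE8 (Pi.single a 1) (Pi.single b 1) = cartanE8 a b := by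
  rw [bE8, Matrix.toLinearMap₂'_apply]
  simp [Pi.single_apply, ite_smul, zero_smul, Finset.sum_ite_eq, smul_eq_mul]

lemma castC_entry (a b : Fin 8) : ((cartanE8 a b : ℤ) : ℚ) = cartanE8Q a b := by
  rw [← castC, cq_apply]

lemma PhiPsi : Phi = Psi := by
  refine bT.ext fun p => bT.ext fun q => ?_
  have hL : Phi (bT p) (bT q) = cartanE8Q p.1 q.1 * cartanE8Q p.2 q.2 := by
    rw [show Phi (bT p) (bT q)
        = bXf (fIso (bT p) : Fin 8 → Fin 8 → ℚ) (fIso (bT q) : Fin 8 → Fin 8 → ℚ) from rfl]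
    rw [fIso_basis, fIso_basis, bE_coe, bE_coe, ← bX8_eq, bX8_gg]
  have hR : Psi (bT p) (bT q) = ((cartanE8 p.2 q.2 * cartanE8 p.1 q.1 : ℤ) : ℚ) := by
    rw [show Psi (bT p) (bT q)
        = (((LinearMap.BilinForm.tmul bE8 bE8) (bT p) (bT q) : ℤ) : ℚ) by
          rw [Psi]; rfl]
    have hb : ∀ r, bT r = (Pi.single r.1 1 : Fin 8 → ℤ) ⊗ₜ[ℤ] (Pi.single r.2 1 : Fin 8 → ℤ) :=
      fun r => (Module.Basis.tensorProduct_apply' (Pi.basisFun ℤ (Fin 8)) (Pi.basisFun ℤ (Fin 8)) r).trans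
        (by rw [Pi.basisFun_apply, Pi.basisFun_apply])
    rw [hb p, hb q]
    rw [show (LinearMap.BilinForm.tmul bE8 bE8)
          ((Pi.single p.1 1 : Fin 8 → ℤ) ⊗ₜ[ℤ] (Pi.single p.2 1 : Fin 8 → ℤ))
          ((Pi.single q.1 1 : Fin 8 → ℤ) ⊗ₜ[ℤ] (Pi.single q.2 1 : Fin 8 → ℤ))
        = bE8 (Pi.single p.2 1) (Pi.single q.2 1) • bE8 (Pi.single p.1 1) (Pi.single q.1 1)
        from LinearMap.BilinForm.tensorDistrib_tmul ..]
    rw [bE8_single, bE8_single, smul_eq_mul]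
  rw [hL, hR]
  push_cast [castC_entry]
  ring

lemma isom : ∀ u v, bX8 (fIso u : Fin 8 → Fin 8 → ℚ) (fIso v : Fin 8 → Fin 8 → ℚ)
    = (((LinearMap.BilinForm.tmul bE8 bE8) u v : ℤ) : ℚ) := by
  intro u v
  have h := LinearMap.congr_fun (LinearMap.congr_fun PhiPsi u) v
  rw [show Phi u v = bXf (fIso u : Fin 8 → Fin 8 → ℚ) (fIso v : Fin 8 → Fin 8 → ℚ) from rfl] at h
  rw [show Psi u v = (((LinearMap.BilinForm.tmul bE8 bE8) u v : ℤ) : ℚ) by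
    rw [Psi]; rfl] at h
  rw [bX8_eq, h]

end CalAux

namespace CalAux

/-! ### symmetry, integrality, evenness, duality, rank -/

lemma CQ_symm (k l : Fin 8) : cartanE8Q k l = cartanE8Q l k := by
  fin_cases k <;> fin_cases l <;> rfl

lemma bE8Q_symm (v w : Fin 8 → ℚ) : bE8Q v w = bE8Q w v := by
  rw [bE8Q_apply, bE8Q_apply, Finset.sum_comm]
  exact Finset.sum_congr rfl fun k _ => Finset.sum_congr rfl fun l _ => by
    rw [CQ_symm l k]; ring

lemma bX8_symm (x y : Fin 8 → Fin 8 → ℚ) : bX8 x y = bX8 y x := by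
  unfold bX8
  exact Finset.sum_congr rfl fun i _ => bE8Q_symm (x i) (y i)

lemma bX8_int {x y : Fin 8 → Fin 8 → ℚ} (hx : x ∈ calE8) (hy : y ∈ calE8) :
    ∃ m : ℤ, bX8 x y = (m : ℚ) := by
  choose a ha using (charE8 x).mp hx
  choose b hb using (charE8 y).mp hy
  refine ⟨∑ p : Fin 8 × Fin 8, ∑ q : Fin 8 × Fin 8,
      a p.1 p.2 * b q.1 q.2 * (cartanE8 p.1 q.1 * cartanE8 p.2 q.2), ?_⟩
  conv_lhs => rw [← decomp x, ← decomp y]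
  rw [bX8_sum]
  push_cast
  refine Finset.sum_congr rfl fun p _ => Finset.sum_congr rfl fun q _ => ?_
  rw [ha p.1 p.2, hb q.1 q.2, castC_entry, castC_entry]

lemma bE8Q_int {α β : Fin 8 → ℚ} (hα : IsIntVec α) (hβ : IsIntVec β) :
    ∃ m : ℤ, bE8Q α β = (m : ℚ) := by
  choose a ha using hα
  choose b hb using hβ
  refine ⟨∑ k, ∑ l, a k * b l * cartanE8 k l, ?_⟩
  rw [bE8Q_apply]
  push_cast
  refine Finset.sum_congr rfl fun k _ => Finset.sum_congr rfl fun l _ => ?_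
  rw [ha k, hb l, castC_entry]
  ring

lemma even_calE8 : ∀ x ∈ calE8, ∃ k : ℤ, bX8 x x = 2 * (k : ℚ) := by
  intro x hx
  have hx' := hx
  rw [calE8_eq_span] at hx
  induction hx using Submodule.span_induction with
  | mem z hz =>
    rcases hz with hz | hz
    · obtain ⟨α, hα, i0, j0, hij, hc⟩ := hz
      obtain ⟨q, hq⟩ := bE8Q_int hα hα
      refine ⟨q, ?_⟩
      have hne : i0 ≠ j0 := hij.ne
      rcases hc with rfl | rfl
      · have hv : ∀ i, (Pi.single i0 α - Pi.single j0 α : Fin 8 → Fin 8 → ℚ) i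
            = ((if i = i0 then (1:ℚ) else 0) - (if i = j0 then 1 else 0)) • α := by
          intro i
          funext k'
          simp only [Pi.sub_apply, single_apply₂, Pi.smul_apply, smul_eq_mul]
          by_cases h1 : i = i0 <;> by_cases h2 : i = j0 <;>
            simp [h1, h2, hne, Ne.symm hne] <;> ring
        have hsq : ∀ i, ((if i = i0 then (1:ℚ) else 0) - (if i = j0 then 1 else 0))
            * ((if i = i0 then (1:ℚ) else 0) - (if i = j0 then 1 else 0))
            = (if i = i0 then (1:ℚ) else 0) + (if i = j0 then 1 else 0) := by
          intro i
          by_cases h1 : i = i0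
          · by_cases h2 : i = j0
            · exact absurd (h1.symm.trans h2) hne
            · simp [h1, h2, hne, Ne.symm hne]
          · by_cases h2 : i = j0 <;> simp [h1, h2, hne, Ne.symm hne] <;> norm_num
        have : bX8 (Pi.single i0 α - Pi.single j0 α) (Pi.single i0 α - Pi.single j0 α)
            = ∑ i, ((if i = i0 then (1:ℚ) else 0) + (if i = j0 then 1 else 0)) * bE8Q α α := by
          unfold bX8
          refine Finset.sum_congr rfl fun i _ => ?_
          rw [hv i]
          simp only [map_smul, LinearMap.smul_apply, smul_eq_mul]
          rw [← mul_assoc, hsq i]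
        rw [this, ← Finset.sum_mul, hq]
        have hsum : ∑ i, ((if i = i0 then (1:ℚ) else 0) + (if i = j0 then 1 else 0)) = 2 := by
          rw [Finset.sum_add_distrib]
          simp [Finset.sum_ite_eq']
          try norm_num
        rw [hsum]
      · have hv : ∀ i, (Pi.single i0 α + Pi.single j0 α : Fin 8 → Fin 8 → ℚ) i
            = ((if i = i0 then (1:ℚ) else 0) + (if i = j0 then 1 else 0)) • α := by
          intro i
          funext k'
          simp only [Pi.add_apply, single_apply₂, Pi.smul_apply, smul_eq_mul]
          by_cases h1 : i = i0 <;> by_cases h2 : i = j0 <;>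
            simp [h1, h2, hne, Ne.symm hne] <;> ring
        have hsq : ∀ i, ((if i = i0 then (1:ℚ) else 0) + (if i = j0 then 1 else 0))
            * ((if i = i0 then (1:ℚ) else 0) + (if i = j0 then 1 else 0))
            = (if i = i0 then (1:ℚ) else 0) + (if i = j0 then 1 else 0) := by
          intro i
          by_cases h1 : i = i0
          · by_cases h2 : i = j0
            · exact absurd (h1.symm.trans h2) hne
            · simp [h1, h2, hne, Ne.symm hne]
          · by_cases h2 : i = j0 <;> simp [h1, h2, hne, Ne.symm hne] <;> norm_num
        have : bX8 (Pi.single i0 α + Pi.single j0 α) (Pi.single i0 α + Pi.single j0 α)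
            = ∑ i, ((if i = i0 then (1:ℚ) else 0) + (if i = j0 then 1 else 0)) * bE8Q α α := by
          unfold bX8
          refine Finset.sum_congr rfl fun i _ => ?_
          rw [hv i]
          simp only [map_smul, LinearMap.smul_apply, smul_eq_mul]
          rw [← mul_assoc, hsq i]
        rw [this, ← Finset.sum_mul, hq]
        have hsum : ∑ i, ((if i = i0 then (1:ℚ) else 0) + (if i = j0 then 1 else 0)) = 2 := by
          rw [Finset.sum_add_distrib]
          simp [Finset.sum_ite_eq']
          try norm_num
        rw [hsum]
    · obtain ⟨α, hα, rfl⟩ := hz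
      obtain ⟨q, hq⟩ := bE8Q_int hα hα
      refine ⟨q, ?_⟩
      have : bX8 (fun _ => (1/2 : ℚ) • α) (fun _ => (1/2 : ℚ) • α)
          = ∑ _i : Fin 8, (1/4 : ℚ) * bE8Q α α := by
        unfold bX8
        refine Finset.sum_congr rfl fun i _ => ?_
        show bE8Q ((1/2 : ℚ) • α) ((1/2 : ℚ) • α) = (1/4 : ℚ) * bE8Q α α
        simp only [map_smul, LinearMap.smul_apply, smul_eq_mul]
        ring
      rw [this, Finset.sum_const, Finset.card_univ, Fintype.card_fin, nsmul_eq_mul, hq]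
      push_cast
      ring
  | zero => exact ⟨0, by simp [bX8]⟩
  | add u w hu hw ihu ihw =>
    have hu' : u ∈ calE8 := by rw [calE8_eq_span]; exact hu
    have hw' : w ∈ calE8 := by rw [calE8_eq_span]; exact hw
    obtain ⟨ku, hku⟩ := ihu hu'
    obtain ⟨kw, hkw⟩ := ihw hw'
    obtain ⟨m, hm⟩ := bX8_int hu' hw'
    refine ⟨ku + kw + m, ?_⟩
    have : bX8 (u + w) (u + w) = bX8 u u + bX8 u w + (bX8 w u + bX8 w w) := by
      simp only [bX8_eq, map_add, LinearMap.add_apply]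
      ring
    rw [this, hku, hkw, hm, bX8_symm w u, hm]
    push_cast
    ring
  | smul a u hu ihu =>
    have hu' : u ∈ calE8 := by rw [calE8_eq_span]; exact hu
    obtain ⟨k, hk⟩ := ihu hu'
    refine ⟨a * a * k, ?_⟩
    have : bX8 (a • u) (a • u) = (a : ℚ) * ((a : ℚ) * bX8 u u) := by
      rw [bX8_eq]
      simp only [map_zsmul, LinearMap.smul_apply]
      rw [zsmul_eq_mul, zsmul_eq_mul, bX8_eq]
    rw [this, hk]
    push_cast
    ring

noncomputable def GQ : Matrix (Fin 8 × Fin 8) (Fin 8 × Fin 8) ℚ :=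
  fun p q => cartanE8Q p.1 q.1 * cartanE8Q p.2 q.2

def GinvZ : Matrix (Fin 8 × Fin 8) (Fin 8 × Fin 8) ℤ :=
  fun p q => CinvZ p.1 q.1 * CinvZ p.2 q.2

lemma CQCinv (a b : Fin 8) : ∑ c, cartanE8Q a c * (CinvZ c b : ℚ) = if a = b then 1 else 0 := by
  have h : cq (cartanE8 * CinvZ) a b = cq 1 a b := by rw [hCC]
  rw [cq_mul, Matrix.mul_apply] at h
  rw [show ((if a = b then (1:ℚ) else 0)) = cq 1 a b by rw [cq_one, Matrix.one_apply], ← h]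
  exact Finset.sum_congr rfl fun c _ => by rw [← castC, cq_apply, cq_apply, castC_entry]

lemma GGinv (p r : Fin 8 × Fin 8) :
    ∑ q : Fin 8 × Fin 8, GQ p q * (GinvZ q r : ℚ) = if p = r then 1 else 0 := by
  rw [Fintype.sum_prod_type]
  have h1 : ∀ q1 q2 : Fin 8, GQ p (q1, q2) * (GinvZ (q1, q2) r : ℚ)
      = (cartanE8Q p.1 q1 * (CinvZ q1 r.1 : ℚ)) * (cartanE8Q p.2 q2 * (CinvZ q2 r.2 : ℚ)) := by
    intro q1 q2
    rw [GQ, GinvZ]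
    push_cast
    ring
  calc ∑ q1, ∑ q2, GQ p (q1, q2) * (GinvZ (q1, q2) r : ℚ)
      = ∑ q1, ∑ q2, (cartanE8Q p.1 q1 * (CinvZ q1 r.1 : ℚ))
          * (cartanE8Q p.2 q2 * (CinvZ q2 r.2 : ℚ)) :=
        Finset.sum_congr rfl fun q1 _ => Finset.sum_congr rfl fun q2 _ => h1 q1 q2
    _ = (∑ q1, cartanE8Q p.1 q1 * (CinvZ q1 r.1 : ℚ))
          * (∑ q2, cartanE8Q p.2 q2 * (CinvZ q2 r.2 : ℚ)) := by
        rw [Finset.sum_mul_sum]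
    _ = (if p.1 = r.1 then 1 else 0) * (if p.2 = r.2 then 1 else 0) := by
        rw [CQCinv, CQCinv]
    _ = if p = r then 1 else 0 := by
        by_cases h1' : p.1 = r.1 <;> by_cases h2' : p.2 = r.2 <;>
          simp [h1', h2', Prod.ext_iff]

lemma dual_mem {x : Fin 8 → Fin 8 → ℚ}
    (h : ∀ y ∈ calE8, ∃ m : ℤ, bX8 x y = (m : ℚ)) : x ∈ calE8 := by
  choose mf hmf using fun p => h (gg p) (gg_mem p)
  have hb : ∀ q, bX8 x (gg q) = ∑ p : Fin 8 × Fin 8, lcoef p.1 p.2 x * GQ p q := by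
    intro q
    conv_lhs => rw [← decomp x]
    rw [bX8_eq]
    rw [map_sum, LinearMap.sum_apply]
    refine Finset.sum_congr rfl fun p _ => ?_
    rw [map_smul, LinearMap.smul_apply, smul_eq_mul, ← bX8_eq, bX8_gg]
    rfl
  apply mem_calE8_of_lcoef_int
  intro t k
  refine ⟨∑ r : Fin 8 × Fin 8, mf r * GinvZ r (t, k), ?_⟩
  have key : lcoef t k x
      = ∑ r : Fin 8 × Fin 8, (∑ q : Fin 8 × Fin 8, lcoef q.1 q.2 x * GQ q r)
          * (GinvZ r (t, k) : ℚ) := by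
    have swap : ∑ r : Fin 8 × Fin 8, (∑ q : Fin 8 × Fin 8, lcoef q.1 q.2 x * GQ q r)
          * (GinvZ r (t, k) : ℚ)
        = ∑ q : Fin 8 × Fin 8, lcoef q.1 q.2 x
            * (∑ r : Fin 8 × Fin 8, GQ q r * (GinvZ r (t, k) : ℚ)) := by
      have e1 : ∀ r : Fin 8 × Fin 8,
          (∑ q : Fin 8 × Fin 8, lcoef q.1 q.2 x * GQ q r) * (GinvZ r (t, k) : ℚ)
          = ∑ q : Fin 8 × Fin 8, lcoef q.1 q.2 x * GQ q r * (GinvZ r (t, k) : ℚ) :=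
        fun r => Finset.sum_mul _ _ _
      rw [Finset.sum_congr rfl fun r _ => e1 r, Finset.sum_comm]
      refine Finset.sum_congr rfl fun q _ => ?_
      rw [Finset.mul_sum]
      exact Finset.sum_congr rfl fun r _ => by ring
    rw [swap]
    have : ∀ q : Fin 8 × Fin 8, lcoef q.1 q.2 x
        * (∑ r : Fin 8 × Fin 8, GQ q r * (GinvZ r (t, k) : ℚ))
        = lcoef q.1 q.2 x * (if q = (t, k) then 1 else 0) := by
      intro q
      rw [GGinv]
    rw [Finset.sum_congr rfl fun q _ => this q]
    simp [Finset.sum_ite_eq']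
  rw [key]
  push_cast
  exact Finset.sum_congr rfl fun r _ => by rw [← hb r, hmf r]

lemma spanQ_top : Submodule.span ℚ ((calE8 : Set (Fin 8 → Fin 8 → ℚ))) = ⊤ := by
  rw [eq_top_iff]
  rintro x -
  rw [← decomp x]
  exact Submodule.sum_mem _ fun p _ =>
    Submodule.smul_mem _ _ (Submodule.subset_span (gg_mem p))

lemma rank64 : Module.finrank ℚ (Submodule.span ℚ ((calE8 : Set (Fin 8 → Fin 8 → ℚ)))) = 64 := by
  rw [spanQ_top, finrank_top]
  rw [Module.finrank_pi_fintype ℚ]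
  simp [Module.finrank_fintype_fun_eq_card]

end CalAux

/-- **`ℰ₈ ≅ E₈ ⊗ E₈` is even unimodular of rank `64`.**
There is a `ℤ`-linear isometry from the tensor product lattice `E₈ ⊗ E₈` onto `ℰ₈`;
moreover `ℰ₈` is even, equal to its own dual lattice, and has rank `64`. -/
theorem calE8_isometric_E8_tensor_E8_even_unimodular :
    (∃ f : ((Fin 8 → ℤ) ⊗[ℤ] (Fin 8 → ℤ)) ≃ₗ[ℤ] ↥calE8,
      ∀ u v, bX8 (f u : Fin 8 → Fin 8 → ℚ) (f v : Fin 8 → Fin 8 → ℚ)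
        = ((LinearMap.BilinForm.tmul bE8 bE8) u v : ℚ)) ∧
    (∀ x ∈ calE8, ∃ k : ℤ, bX8 x x = 2 * k) ∧
    (∀ x : Fin 8 → Fin 8 → ℚ, (∀ y ∈ calE8, ∃ m : ℤ, bX8 x y = m) ↔ x ∈ calE8) ∧
    Module.finrank ℚ (Submodule.span ℚ (calE8 : Set (Fin 8 → Fin 8 → ℚ))) = 64 := by
  refine ⟨⟨CalAux.fIso, CalAux.isom⟩, CalAux.even_calE8, fun x => ?_, CalAux.rank64⟩
  exact ⟨fun h => CalAux.dual_mem h, fun hx y hy => CalAux.bX8_int hx hy⟩
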